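/- arXiv:2311.00249 — 6 statements merged into one kernel-verified Lean document; each statement's English description precedes it below -/
import Mathlib

section
/- The relation α ≥ β, defined by 'β can be obtained from α by a (possibly empty) finite sequence of elementary operations', is a partial order on multi-segments; in particular it is antisymmetric: if α ≥ β and β ≥ α then α = β. -/
namespace MS

variable {R : Type*} [CommRing R] [LinearOrder R] [IsStrictOrderedRing R] [FloorRing R]

/-- Number of elements of the segment `[Δ.1, Δ.2]` (integer steps of size 1). -/
def segLen (Δ : R × R) : ℕ := (⌊Δ.2 - Δ.1⌋).toNat + 1

/-- `Δ` is a genuine segment: its end is its base plus a natural number. -/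
def IsSeg (Δ : R × R) : Prop := ∃ n : ℕ, Δ.2 = Δ.1 + (n : R)

/-- Membership of `x` in the segment `Δ = [b,e] = {b, b+1, ..., e}`. -/
def segMem (x : R) (Δ : R × R) : Prop := ∃ j : ℕ, j < segLen Δ ∧ x = Δ.1 + (j : R)

/-- The support of a segment: the multiset `{b, b+1, ..., e}`. -/
def segSupp (Δ : R × R) : Multiset R :=
  (Multiset.range (segLen Δ)).map (fun (j : ℕ) => Δ.1 + (j : R))

/-- The support of a multi-segment: multiset sum of the supports of its segments. -/
def msSupp (α : Multiset (R × R)) : Multiset R := (α.map segSupp).sum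

/-- Containment of segments, as sets. -/
def SubSeg (Δ1 Δ2 : R × R) : Prop := ∀ x : R, segMem x Δ1 → segMem x Δ2

/-- Segments are linked: their union is a segment and neither contains the other. -/
def Linked (Δ1 Δ2 : R × R) : Prop :=
  (∃ Δ : R × R, IsSeg Δ ∧ ∀ x : R, segMem x Δ ↔ (segMem x Δ1 ∨ segMem x Δ2)) ∧
    ¬ SubSeg Δ1 Δ2 ∧ ¬ SubSeg Δ2 Δ1

/-- `β` is obtained from `α` by one elementary operation: replace a linked pair
`{Δ1, Δ2}` by `{Δ1 ∪ Δ2, Δ1 ∩ Δ2}`, dropping the intersection if empty. -/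
def ElemOp (α β : Multiset (R × R)) : Prop :=
  ∃ Δ1 Δ2 γ, α = Δ1 ::ₘ Δ2 ::ₘ γ ∧ Linked Δ1 Δ2 ∧
    β = (if max Δ1.1 Δ2.1 ≤ min Δ1.2 Δ2.2 then
          (min Δ1.1 Δ2.1, max Δ1.2 Δ2.2) ::ₘ (max Δ1.1 Δ2.1, min Δ1.2 Δ2.2) ::ₘ γ
        else (min Δ1.1 Δ2.1, max Δ1.2 Δ2.2) ::ₘ γ)

/-- The Zelevinsky ordering: `MsGE β α` means `β ≥ α`, i.e. `α` is obtained from `β`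
by a finite (possibly empty) sequence of elementary operations. -/
def MsGE (β α : Multiset (R × R)) : Prop := Relation.ReflTransGen ElemOp β α

/-- `c = [Δ_e, Δ_{e-1}, ..., Δ_m]` is a chain selected by the greedy rule of the
Mœglin–Waldspurger algorithm applied to the multi-segment `β`. -/
def IsMWChain (β : Multiset (R × R)) (c : List (R × R)) : Prop :=
  c ≠ [] ∧ (↑c : Multiset (R × R)) ≤ β ∧
  (∀ Δ ∈ β, Δ.2 ≤ (c.headD (0, 0)).2) ∧
  (∀ Δ ∈ β, Δ.2 = (c.headD (0, 0)).2 → Δ.1 ≤ (c.headD (0, 0)).1) ∧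
  c.Chain' (fun Δ Δ' => Δ'.2 = Δ.2 - 1 ∧ Δ'.1 < Δ.1 ∧
      ∀ Γ ∈ β, Γ.2 = Δ.2 - 1 → Γ.1 < Δ.1 → Γ.1 ≤ Δ'.1) ∧
  (∀ Γ ∈ β, Γ.2 = (c.getLastD (0, 0)).2 - 1 → ¬ Γ.1 < (c.getLastD (0, 0)).1)

/-- One step of the Mœglin–Waldspurger algorithm: from `β`, produce the segment
`Δ = M(β) = [m, e]` and the remainder `β' = β \ M(β)` (each selected segment is
shortened by one at its end, empty segments being removed). -/
def MWStep (β : Multiset (R × R)) (Δ : R × R) (β' : Multiset (R × R)) : Prop :=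
  ∃ c : List (R × R), IsMWChain β c ∧
    Δ = ((c.getLastD (0, 0)).2, (c.headD (0, 0)).2) ∧
    β' = (β - ↑c) + ↑((c.filter (fun Γ => Γ.1 ≠ Γ.2)).map (fun Γ => (Γ.1, Γ.2 - 1)))

/-- The Mœglin–Waldspurger involution, as a relation:
`α~ = ∅` if `α = ∅`, and `α~ = {M(α)} + (α \ M(α))~` otherwise. -/
inductive MWDual : Multiset (R × R) → Multiset (R × R) → Prop
  | empty : MWDual 0 0
  | step {β β' γ : Multiset (R × R)} {Δ : R × R} :
      MWStep β Δ β' → MWDual β' γ → MWDual β (Δ ::ₘ γ)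

/-- The staircase multi-segment `{[x - j, x + len - j] : 0 ≤ j ≤ cnt}`.
`stair b ℓ s` is `δ_{b,e,s}` with `e = b + ℓ`; for naturals `d, a`,
`stair ((a-d)/2) d a` is the Arthur staircase `δ_{d,a}`. -/
def stair (x : R) (len cnt : ℕ) : Multiset (R × R) :=
  (Multiset.range (cnt + 1)).map (fun (j : ℕ) => (x - (j : R), x + (len : R) - (j : R)))

end MS


namespace MSProof
open MS

def energy (m : Multiset (ℤ × ℤ)) : ℤ := (m.map (fun Δ => (Δ.2 - Δ.1 + 1)^2)).sum

def Valid (m : Multiset (ℤ × ℤ)) : Prop := ∀ Δ ∈ m, Δ.1 ≤ Δ.2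

lemma segLen_int (Δ : ℤ × ℤ) : segLen Δ = (Δ.2 - Δ.1).toNat + 1 := by
  simp [segLen]

lemma segMem_iff {Δ : ℤ × ℤ} (h : Δ.1 ≤ Δ.2) (x : ℤ) :
    segMem x Δ ↔ Δ.1 ≤ x ∧ x ≤ Δ.2 := by
  rw [segMem, segLen_int]
  constructor
  · rintro ⟨j, hj, rfl⟩; omega
  · rintro ⟨hx1, hx2⟩; exact ⟨(x - Δ.1).toNat, by omega, by omega⟩

lemma subSeg_of {Δ1 Δ2 : ℤ × ℤ} (h1 : Δ1.1 ≤ Δ1.2) (h2 : Δ2.1 ≤ Δ2.2)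
    (hb : Δ2.1 ≤ Δ1.1) (he : Δ1.2 ≤ Δ2.2) : SubSeg Δ1 Δ2 := by
  intro x hx
  rw [segMem_iff h1] at hx
  rw [segMem_iff h2]
  omega

lemma linked_facts {Δ1 Δ2 : ℤ × ℤ} (h1 : Δ1.1 ≤ Δ1.2) (h2 : Δ2.1 ≤ Δ2.2)
    (hL : Linked Δ1 Δ2) :
    ¬(Δ2.1 ≤ Δ1.1 ∧ Δ1.2 ≤ Δ2.2) ∧ ¬(Δ1.1 ≤ Δ2.1 ∧ Δ2.2 ≤ Δ1.2) ∧
      max Δ1.1 Δ2.1 ≤ min Δ1.2 Δ2.2 + 1 := by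
  obtain ⟨⟨Δ, ⟨n, hn⟩, hmem⟩, hs1, hs2⟩ := hL
  refine ⟨fun h => hs1 (subSeg_of h1 h2 h.1 h.2),
          fun h => hs2 (subSeg_of h2 h1 h.1 h.2), ?_⟩
  by_contra hc
  push_neg at hc
  have hΔv : Δ.1 ≤ Δ.2 := by rw [hn]; linarith [Int.ofNat_nonneg n]
  have he1 : Δ.1 ≤ Δ1.2 ∧ Δ1.2 ≤ Δ.2 := by
    rw [← segMem_iff hΔv]
    exact (hmem _).2 (Or.inl ((segMem_iff h1 _).2 ⟨h1, le_refl _⟩))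
  have he2 : Δ.1 ≤ Δ2.2 ∧ Δ2.2 ≤ Δ.2 := by
    rw [← segMem_iff hΔv]
    exact (hmem _).2 (Or.inr ((segMem_iff h2 _).2 ⟨h2, le_refl _⟩))
  have hb1 : Δ.1 ≤ Δ1.1 ∧ Δ1.1 ≤ Δ.2 := by
    rw [← segMem_iff hΔv]
    exact (hmem _).2 (Or.inl ((segMem_iff h1 _).2 ⟨le_refl _, h1⟩))
  have hb2 : Δ.1 ≤ Δ2.1 ∧ Δ2.1 ≤ Δ.2 := by
    rw [← segMem_iff hΔv]
    exact (hmem _).2 (Or.inr ((segMem_iff h2 _).2 ⟨le_refl _, h2⟩))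
  have hx : segMem (min Δ1.2 Δ2.2 + 1) Δ := by
    rw [segMem_iff hΔv]
    constructor
    · rcases min_cases Δ1.2 Δ2.2 with ⟨hm, _⟩ | ⟨hm, _⟩ <;> omega
    · rcases max_cases Δ1.1 Δ2.1 with ⟨hm, _⟩ | ⟨hm, _⟩ <;> omega
  rcases (hmem _).1 hx with hx1 | hx1
  · rw [segMem_iff h1] at hx1
    rcases min_cases Δ1.2 Δ2.2 with ⟨hm, _⟩ | ⟨hm, _⟩ <;>
      rcases max_cases Δ1.1 Δ2.1 with ⟨hM, _⟩ | ⟨hM, _⟩ <;> omega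
  · rw [segMem_iff h2] at hx1
    rcases min_cases Δ1.2 Δ2.2 with ⟨hm, _⟩ | ⟨hm, _⟩ <;>
      rcases max_cases Δ1.1 Δ2.1 with ⟨hM, _⟩ | ⟨hM, _⟩ <;> omega

lemma valid_elemOp {α β : Multiset (ℤ × ℤ)} (hval : Valid α) (h : ElemOp α β) :
    Valid β := by
  obtain ⟨Δ1, Δ2, γ, rfl, hL, rfl⟩ := h
  have h1 : Δ1.1 ≤ Δ1.2 := hval Δ1 (by simp)
  have h2 : Δ2.1 ≤ Δ2.2 := hval Δ2 (by simp)
  have hγ : ∀ Δ ∈ γ, Δ.1 ≤ Δ.2 := fun Δ hΔ => hval Δ (by simp [hΔ])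
  intro Δ hΔ
  split at hΔ
  · rcases Multiset.mem_cons.1 hΔ with rfl | hΔ
    · simp only []
      rcases min_cases Δ1.1 Δ2.1 with ⟨hm, _⟩ | ⟨hm, _⟩ <;>
        rcases max_cases Δ1.2 Δ2.2 with ⟨hM, _⟩ | ⟨hM, _⟩ <;> omega
    rcases Multiset.mem_cons.1 hΔ with rfl | hΔ
    · simp only []
      omega
    · exact hγ Δ hΔ
  · rcases Multiset.mem_cons.1 hΔ with rfl | hΔ
    · simp only []
      rcases min_cases Δ1.1 Δ2.1 with ⟨hm, _⟩ | ⟨hm, _⟩ <;>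
        rcases max_cases Δ1.2 Δ2.2 with ⟨hM, _⟩ | ⟨hM, _⟩ <;> omega
    · exact hγ Δ hΔ

lemma energy_lt_of_elemOp {α β : Multiset (ℤ × ℤ)} (hval : Valid α) (h : ElemOp α β) :
    energy α < energy β := by
  obtain ⟨Δ1, Δ2, γ, rfl, hL, rfl⟩ := h
  have h1 : Δ1.1 ≤ Δ1.2 := hval Δ1 (by simp)
  have h2 : Δ2.1 ≤ Δ2.2 := hval Δ2 (by simp)
  obtain ⟨hnc1, hnc2, hadj⟩ := linked_facts h1 h2 hL
  obtain ⟨b1, e1⟩ := Δ1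
  obtain ⟨b2, e2⟩ := Δ2
  simp only [Prod.fst, Prod.snd] at *
  split
  case isTrue hov =>
    simp only [energy, Multiset.map_cons, Multiset.sum_cons]
    have key : (e1 - b1 + 1)^2 + (e2 - b2 + 1)^2 <
        (max e1 e2 - min b1 b2 + 1)^2 + (min e1 e2 - max b1 b2 + 1)^2 := by
      rcases le_total b1 b2 with hb | hb <;> rcases le_total e1 e2 with he | he <;>
        [skip; (exact absurd ⟨hb, he⟩ hnc2); (exact absurd ⟨hb, he⟩ hnc1); skip]
      · rw [min_eq_left hb, max_eq_right he, max_eq_right hb, min_eq_left he]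
        have hb' : b1 < b2 := by by_contra hh; exact hnc1 ⟨by omega, he⟩
        have he' : e1 < e2 := by by_contra hh; exact hnc2 ⟨hb, by omega⟩
        nlinarith [mul_pos (by omega : (0:ℤ) < e2 - e1) (by omega : (0:ℤ) < b2 - b1)]
      · rw [min_eq_right hb, max_eq_left he, max_eq_left hb, min_eq_right he]
        have hb' : b2 < b1 := by by_contra hh; exact hnc2 ⟨by omega, he⟩
        have he' : e2 < e1 := by by_contra hh; exact hnc1 ⟨hb, by omega⟩
        nlinarith [mul_pos (by omega : (0:ℤ) < e1 - e2) (by omega : (0:ℤ) < b1 - b2)]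
    linarith
  case isFalse hov =>
    simp only [energy, Multiset.map_cons, Multiset.sum_cons]
    push_neg at hov
    have key : (e1 - b1 + 1)^2 + (e2 - b2 + 1)^2 <
        (max e1 e2 - min b1 b2 + 1)^2 := by
      rcases le_total b1 b2 with hb | hb
      · have hmine : min e1 e2 = e1 := by
          rcases max_cases b1 b2 with ⟨hM, _⟩ | ⟨hM, _⟩ <;>
            rcases min_cases e1 e2 with ⟨hm, _⟩ | ⟨hm, _⟩ <;> omega
        have hadj' : b2 = e1 + 1 := by
          rcases max_cases b1 b2 with ⟨hM, _⟩ | ⟨hM, _⟩ <;> omega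
        rw [min_eq_left hb, max_eq_right (by omega : e1 ≤ e2)]
        nlinarith [mul_pos (by omega : (0:ℤ) < e1 - b1 + 1) (by omega : (0:ℤ) < e2 - b2 + 1)]
      · have hmine : min e1 e2 = e2 := by
          rcases max_cases b1 b2 with ⟨hM, _⟩ | ⟨hM, _⟩ <;>
            rcases min_cases e1 e2 with ⟨hm, _⟩ | ⟨hm, _⟩ <;> omega
        have hadj' : b1 = e2 + 1 := by
          rcases max_cases b1 b2 with ⟨hM, _⟩ | ⟨hM, _⟩ <;> omega
        rw [min_eq_right hb, max_eq_left (by omega : e2 ≤ e1)]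
        nlinarith [mul_pos (by omega : (0:ℤ) < e1 - b1 + 1) (by omega : (0:ℤ) < e2 - b2 + 1)]
    linarith

lemma valid_msGE {α β : Multiset (ℤ × ℤ)} (h : MsGE α β) (hval : Valid α) : Valid β := by
  induction h with
  | refl => exact hval
  | tail _ h2 ih => exact valid_elemOp ih h2

lemma energy_le_msGE {α β : Multiset (ℤ × ℤ)} (h : MsGE α β) (hval : Valid α) :
    energy α ≤ energy β := by
  induction h with
  | refl => exact le_refl _
  | tail hab hbc ih =>
      exact le_of_lt (lt_of_le_of_lt ih (energy_lt_of_elemOp (valid_msGE hab hval) hbc))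

end MSProof

/-- the Zelevinsky order is antisymmetric. -/
theorem msGE_antisymm (α β : Multiset (ℤ × ℤ))
    (hvalα : ∀ Δ ∈ α, Δ.1 ≤ Δ.2) (hvalβ : ∀ Δ ∈ β, Δ.1 ≤ Δ.2)
    (h1 : MS.MsGE α β) (h2 : MS.MsGE β α) : α = β := by
  rcases Relation.ReflTransGen.cases_head h1 with rfl | ⟨c, hac, hcb⟩
  · rfl
  · exfalso
    have h3 := MSProof.energy_lt_of_elemOp hvalα hac
    have h4 := MSProof.energy_le_msGE hcb (MSProof.valid_elemOp hvalα hac)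
    have h5 := MSProof.energy_le_msGE h2 hvalβ
    linarith
end

section
/- If a nontrivial elementary operation transforms multi-segment α into β (replacing a genuinely linked pair), then the sum over all segments Δ of β of l(Δ)^2 is strictly greater than the corresponding sum for α, where l([b,e]) = e − b + 1. -/
lemma segMem_int {a b : ℤ} (x : ℤ) (h : a ≤ b) :
    MS.segMem x ((a, b) : ℤ × ℤ) ↔ a ≤ x ∧ x ≤ b := by
  unfold MS.segMem MS.segLen
  simp only [Int.floor_int, id]
  constructor
  · rintro ⟨j, hj, rfl⟩
    omega
  · rintro ⟨h1, h2⟩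
    exact ⟨(x - a).toNat, by omega, by omega⟩

/-- a nontrivial elementary operation strictly increases
the sum of the squared lengths. -/
theorem elemOp_sq_lt (α β : Multiset (ℤ × ℤ)) (hval : ∀ Δ ∈ α, Δ.1 ≤ Δ.2)
    (h : MS.ElemOp α β) :
    (α.map (fun Δ => (Δ.2 - Δ.1 + 1) ^ 2)).sum <
      (β.map (fun Δ => (Δ.2 - Δ.1 + 1) ^ 2)).sum := by
  obtain ⟨Δ1, Δ2, γ, hα, ⟨⟨Δu, ⟨n, hn⟩, hiff⟩, h12, h21⟩, hβ⟩ := h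
  obtain ⟨a, b⟩ := Δ1
  obtain ⟨c, d⟩ := Δ2
  obtain ⟨u, v⟩ := Δu
  simp only at hn hβ ⊢
  have hab : a ≤ b := hval (a,b) (by rw [hα]; exact Multiset.mem_cons_self _ _)
  have hcd : c ≤ d := hval (c,d) (by rw [hα]; exact Multiset.mem_cons_of_mem (Multiset.mem_cons_self _ _))
  have huv : u ≤ v := by have := hn; omega
  -- rewrite memberships
  have hiff' : ∀ x : ℤ, (u ≤ x ∧ x ≤ v) ↔ ((a ≤ x ∧ x ≤ b) ∨ (c ≤ x ∧ x ≤ d)) := by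
    intro x
    rw [← segMem_int x huv, ← segMem_int x hab, ← segMem_int x hcd]
    exact hiff x
  -- non-containments
  have hnc1 : a < c ∨ d < b := by
    by_contra hcon
    push_neg at hcon
    exact h12 (fun x hx => by
      rw [segMem_int x hab] at hx; rw [segMem_int x hcd]; omega)
  have hnc2 : c < a ∨ b < d := by
    by_contra hcon
    push_neg at hcon
    exact h21 (fun x hx => by
      rw [segMem_int x hcd] at hx; rw [segMem_int x hab]; omega)
  -- union is interval: adjacency
  have hua : u ≤ a ∧ b ≤ v := by
    have h1 := (hiff' a).2 (Or.inl ⟨le_refl a, hab⟩)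
    have h2 := (hiff' b).2 (Or.inl ⟨hab, le_refl b⟩)
    omega
  have huc : u ≤ c ∧ d ≤ v := by
    have h1 := (hiff' c).2 (Or.inr ⟨le_refl c, hcd⟩)
    have h2 := (hiff' d).2 (Or.inr ⟨hcd, le_refl d⟩)
    omega
  have hadj : max a c ≤ min b d + 1 := by
    by_contra hcon
    push_neg at hcon
    have hx := (hiff' (min b d + 1)).1 (by omega)
    omega
  have key : (a < c ∧ b < d) ∨ (c < a ∧ d < b) := by omega
  rw [hα, hβ]
  by_cases hif : max a c ≤ min b d
  · rw [if_pos hif]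
    simp only [Multiset.map_cons, Multiset.sum_cons]
    have goal2 : (b - a + 1) ^ 2 + (d - c + 1) ^ 2 <
        (max b d - min a c + 1) ^ 2 + (min b d - max a c + 1) ^ 2 := by
      rcases key with ⟨h1, h2⟩ | ⟨h1, h2⟩
      · rw [max_eq_right h2.le, min_eq_left h1.le, min_eq_left h2.le, max_eq_right h1.le]
        nlinarith [hif, h1, h2, hab, hcd]
      · rw [max_eq_left h2.le, min_eq_right h1.le, min_eq_right h2.le, max_eq_left h1.le]
        nlinarith [hif, h1, h2, hab, hcd]
    linarith
  · rw [if_neg hif]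
    push_neg at hif
    have hadj' : max a c = min b d + 1 := by omega
    simp only [Multiset.map_cons, Multiset.sum_cons]
    have goal2 : (b - a + 1) ^ 2 + (d - c + 1) ^ 2 < (max b d - min a c + 1) ^ 2 := by
      rcases key with ⟨h1, h2⟩ | ⟨h1, h2⟩
      · rw [max_eq_right h2.le, min_eq_left h1.le]
        have hc : c = b + 1 := by omega
        nlinarith [hab, hcd, hc]
      · rw [max_eq_left h2.le, min_eq_right h1.le]
        have ha : a = d + 1 := by omega
        nlinarith [hab, hcd, ha]
    linarith
end

section
/- Let β be a multi-segment, and for i ≥ 0 let β^i denote the result of applying the MW-removal step i times (β^0 = β, β^{i+1} = β^i \ M(β^i)), with M(β^i) = [m^i, e^i]. Let e = e^0 be the maximal end value in β and t = #{Δ ∈ β : e(Δ) = e}. Then e^i = e for all 0 ≤ i ≤ t−1, and m^0 ≤ m^1 ≤ ... ≤ m^{t−1}. -/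
section MWHelpers

open MS

private lemma MW.headD_eq_get {c : List (ℤ × ℤ)} (h : c ≠ []) :
    c.headD (0, 0) = c.get ⟨0, List.length_pos_iff.mpr h⟩ := by
  cases c with
  | nil => exact absurd rfl h
  | cons a l => rfl

private lemma MW.getLastD_eq_get {c : List (ℤ × ℤ)} (h : c ≠ []) :
    c.getLastD (0, 0) = c.get ⟨c.length - 1, by
      have := List.length_pos_iff.mpr h; omega⟩ := by
  rw [List.getLastD_eq_getLast?, List.getLast?_eq_getLast h, Option.getD_some,
    List.getLast_eq_getElem, List.get_eq_getElem]

private lemma MW.chain_rel {β : Multiset (ℤ × ℤ)} {c : List (ℤ × ℤ)}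
    (hc : MS.IsMWChain β c) (k : ℕ) (hk : k + 1 < c.length) :
    (c.get ⟨k + 1, hk⟩).2 = (c.get ⟨k, by omega⟩).2 - 1 ∧
    (c.get ⟨k + 1, hk⟩).1 < (c.get ⟨k, by omega⟩).1 ∧
    ∀ Γ ∈ β, Γ.2 = (c.get ⟨k, by omega⟩).2 - 1 → Γ.1 < (c.get ⟨k, by omega⟩).1 →
      Γ.1 ≤ (c.get ⟨k + 1, hk⟩).1 :=
  (List.isChain_iff_getElem.mp hc.2.2.2.2.1) k (by omega)

private lemma MW.chain_get_end {β : Multiset (ℤ × ℤ)} {c : List (ℤ × ℤ)}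
    (hc : MS.IsMWChain β c) :
    ∀ (k : ℕ) (hk : k < c.length), (c.get ⟨k, hk⟩).2 = (c.headD (0, 0)).2 - k := by
  intro k
  induction k with
  | zero =>
    intro hk
    rw [MW.headD_eq_get hc.1]
    simp
  | succ k ih =>
    intro hk
    have h1 := (MW.chain_rel hc k hk).1
    rw [h1, ih (by omega)]
    push_cast
    ring

private lemma MW.mem_chain_end_le {β : Multiset (ℤ × ℤ)} {c : List (ℤ × ℤ)}
    (hc : MS.IsMWChain β c) {Δ : ℤ × ℤ} (hΔ : Δ ∈ c) : Δ.2 ≤ (c.headD (0, 0)).2 := by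
  obtain ⟨⟨j, hj⟩, rfl⟩ := List.mem_iff_get.mp hΔ
  rw [MW.chain_get_end hc j hj]
  omega

private lemma MW.mem_chain_eq_get {β : Multiset (ℤ × ℤ)} {c : List (ℤ × ℤ)}
    (hc : MS.IsMWChain β c) {Δ : ℤ × ℤ} (hΔ : Δ ∈ c) (k : ℕ) (hk : k < c.length)
    (hend : Δ.2 = (c.headD (0, 0)).2 - k) : Δ = c.get ⟨k, hk⟩ := by
  obtain ⟨⟨j, hj⟩, rfl⟩ := List.mem_iff_get.mp hΔ
  have hje := MW.chain_get_end hc j hj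
  have : (j : ℤ) = (k : ℤ) := by omega
  have hjk : j = k := by exact_mod_cast this
  subst hjk
  rfl

/-- Key comparison between successive MW chains. -/
private lemma MW.key {β β' : Multiset (ℤ × ℤ)} {c c' : List (ℤ × ℤ)}
    (hc : MS.IsMWChain β c) (hc' : MS.IsMWChain β' c')
    (hβ' : β' = (β - ↑c) + ↑((c.filter (fun Γ => Γ.1 ≠ Γ.2)).map (fun Γ => (Γ.1, Γ.2 - 1))))
    (hee : (c'.headD (0, 0)).2 = (c.headD (0, 0)).2) :
    ∀ (k : ℕ) (hk' : k < c'.length), ∃ hk : k < c.length,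
      (c'.get ⟨k, hk'⟩).1 ≤ (c.get ⟨k, hk⟩).1 := by
  set e := (c.headD (0, 0)).2 with he
  have hmem : ∀ Γ' ∈ β', Γ' ∈ β ∨ ∃ Δ ∈ c, Δ.1 ≠ Δ.2 ∧ Γ' = (Δ.1, Δ.2 - 1) := by
    intro Γ' h
    rw [hβ', Multiset.mem_add] at h
    rcases h with h | h
    · exact Or.inl (Multiset.mem_of_le (Multiset.sub_le_self _ _) h)
    · right
      rw [Multiset.mem_coe, List.mem_map] at h
      obtain ⟨Δ, hΔ, rfl⟩ := h
      rw [List.mem_filter] at hΔ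
      exact ⟨Δ, hΔ.1, by simpa using hΔ.2, rfl⟩
  intro k
  induction k with
  | zero =>
    intro hk'
    have hk : 0 < c.length := List.length_pos_iff.mpr hc.1
    refine ⟨hk, ?_⟩
    have hmem0 : c'.get ⟨0, hk'⟩ ∈ β' :=
      Multiset.mem_of_le hc'.2.1 (Multiset.mem_coe.mpr (c'.get_mem ⟨0, hk'⟩))
    have hend0 : (c'.get ⟨0, hk'⟩).2 = e := by
      rw [← MW.headD_eq_get hc'.1, hee]
    rcases hmem _ hmem0 with h | ⟨Δ, hΔc, hne, heq⟩
    · have h2 := hc.2.2.2.1 _ h (by rw [hend0])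
      rwa [MW.headD_eq_get hc.1] at h2
    · exfalso
      have hle := MW.mem_chain_end_le hc hΔc
      rw [heq] at hend0
      simp only at hend0
      omega
  | succ k ih =>
    intro hk'
    obtain ⟨hk, hbase⟩ := ih (by omega)
    have hrel' := MW.chain_rel hc' k hk'
    set Γ' := c'.get ⟨k + 1, hk'⟩ with hΓ'
    have hΓ'β' : Γ' ∈ β' :=
      Multiset.mem_of_le hc'.2.1 (Multiset.mem_coe.mpr (c'.get_mem ⟨_, hk'⟩))
    have hΓ'end : Γ'.2 = e - (k + 1 : ℕ) := by
      rw [hΓ', MW.chain_get_end hc' (k + 1) hk', hee]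
    have hΓ'lt : Γ'.1 < (c.get ⟨k, hk⟩).1 := lt_of_lt_of_le hrel'.2.1 hbase
    rcases hmem _ hΓ'β' with h | ⟨Δ, hΔc, hne, heq⟩
    · have hck : k + 1 < c.length := by
        by_contra hcon
        have hkl : k = c.length - 1 := by omega
        have hlast : c.getLastD (0, 0) = c.get ⟨k, hk⟩ := by
          rw [MW.getLastD_eq_get hc.1]
          exact congrArg c.get (Fin.ext (by simp only []; omega))
        have hstop := hc.2.2.2.2.2 Γ' h
        rw [hlast] at hstop
        apply hstop _ hΓ'lt
        rw [hΓ'end, MW.chain_get_end hc k hk]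
        push_cast
        ring
      refine ⟨hck, ?_⟩
      refine (MW.chain_rel hc k hck).2.2 Γ' h ?_ hΓ'lt
      rw [hΓ'end, MW.chain_get_end hc k hk]
      push_cast
      ring
    · exfalso
      have hΔ2 : Δ.2 = e - (k : ℕ) := by
        have h2 : Γ'.2 = Δ.2 - 1 := by rw [heq]
        rw [hΓ'end] at h2
        push_cast at h2 ⊢
        omega
      have hΔget := MW.mem_chain_eq_get hc hΔc k hk hΔ2
      have h1 : Γ'.1 = (c.get ⟨k, hk⟩).1 := by rw [heq, ← hΔget]
      omega

private lemma MW.key_m {β β' : Multiset (ℤ × ℤ)} {c c' : List (ℤ × ℤ)}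
    (hc : MS.IsMWChain β c) (hc' : MS.IsMWChain β' c')
    (hβ' : β' = (β - ↑c) + ↑((c.filter (fun Γ => Γ.1 ≠ Γ.2)).map (fun Γ => (Γ.1, Γ.2 - 1))))
    (hee : (c'.headD (0, 0)).2 = (c.headD (0, 0)).2) :
    (c.getLastD (0, 0)).2 ≤ (c'.getLastD (0, 0)).2 := by
  have h1' : 0 < c'.length := List.length_pos_iff.mpr hc'.1
  have h1 : 0 < c.length := List.length_pos_iff.mpr hc.1
  obtain ⟨hlt, -⟩ := MW.key hc hc' hβ' hee (c'.length - 1) (by omega)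
  have hlen : c'.length ≤ c.length := by omega
  rw [MW.getLastD_eq_get hc.1, MW.getLastD_eq_get hc'.1,
    MW.chain_get_end hc _ _, MW.chain_get_end hc' _ _, hee]
  have hcast : ((c'.length - 1 : ℕ) : ℤ) ≤ ((c.length - 1 : ℕ) : ℤ) := by
    exact_mod_cast Nat.sub_le_sub_right hlen 1
  omega

end MWHelpers

/-- during the first `t` iterations of the MW algorithm, the end value of
`M(β^i)` stays equal to `e`, and `m^0 ≤ m^1 ≤ ... ≤ m^(t-1)`. -/
theorem mw_iterates_e_and_m (β : Multiset (ℤ × ℤ)) (hval : ∀ Δ ∈ β, Δ.1 ≤ Δ.2) (hne : β ≠ 0)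
    (e : ℤ) (he : (∃ Δ ∈ β, Δ.2 = e) ∧ ∀ Δ ∈ β, Δ.2 ≤ e)
    (t : ℕ) (ht : t = (β.filter (fun Δ => Δ.2 = e)).card)
    (B : ℕ → Multiset (ℤ × ℤ)) (M : ℕ → ℤ × ℤ) (hB0 : B 0 = β)
    (hstep : ∀ i < t, MS.MWStep (B i) (M i) (B (i + 1))) :
    (∀ i < t, (M i).2 = e) ∧ (∀ i j : ℕ, i ≤ j → j < t → (M i).1 ≤ (M j).1) := by
  classical
  have hinv : ∀ i, i ≤ t → (∀ Δ ∈ B i, Δ.1 ≤ Δ.2) ∧ (∀ Δ ∈ B i, Δ.2 ≤ e) ∧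
      (Multiset.card ((B i).filter (fun Δ => Δ.2 = e))) = t - i := by
    intro i
    induction i with
    | zero =>
      intro _
      rw [hB0]
      exact ⟨hval, he.2, by omega⟩
    | succ i ih =>
      intro hit
      have hi : i < t := by omega
      obtain ⟨h1, h2, h3⟩ := ih hi.le
      obtain ⟨c, hc, hM, hB⟩ := hstep i hi
      have hhd_mem : c.headD (0, 0) ∈ B i := by
        rw [MW.headD_eq_get hc.1]
        exact Multiset.mem_of_le hc.2.1 (Multiset.mem_coe.mpr (c.get_mem _))
      have hpos : 0 < Multiset.card ((B i).filter (fun Δ => Δ.2 = e)) := by omega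
      obtain ⟨Δe, hΔe⟩ := Multiset.card_pos_iff_exists_mem.mp hpos
      rw [Multiset.mem_filter] at hΔe
      have hhead : (c.headD (0, 0)).2 = e := by
        have ha := hc.2.2.1 Δe hΔe.1
        have hb := h2 _ hhd_mem
        have hcc := hΔe.2
        omega
      have hmem : ∀ Γ ∈ B (i + 1), Γ ∈ B i ∨ ∃ Δ ∈ c, Δ.1 ≠ Δ.2 ∧ Γ = (Δ.1, Δ.2 - 1) := by
        intro Γ h
        rw [hB, Multiset.mem_add] at h
        rcases h with h | h
        · exact Or.inl (Multiset.mem_of_le (Multiset.sub_le_self _ _) h)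
        · right
          rw [Multiset.mem_coe, List.mem_map] at h
          obtain ⟨Δ, hΔ, rfl⟩ := h
          rw [List.mem_filter] at hΔ
          exact ⟨Δ, hΔ.1, by simpa using hΔ.2, rfl⟩
      refine ⟨?_, ?_, ?_⟩
      · intro Δ hΔ
        rcases hmem Δ hΔ with h | ⟨Γ, hΓc, hne', rfl⟩
        · exact h1 Δ h
        · have := h1 Γ (Multiset.mem_of_le hc.2.1 (Multiset.mem_coe.mpr hΓc))
          simp only
          omega
      · intro Δ hΔ
        rcases hmem Δ hΔ with h | ⟨Γ, hΓc, hne', rfl⟩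
        · exact h2 Δ h
        · have := h2 Γ (Multiset.mem_of_le hc.2.1 (Multiset.mem_coe.mpr hΓc))
          simp only
          omega
      · rw [hB, Multiset.filter_add, Multiset.card_add]
        have hz : (Multiset.filter (fun Δ : ℤ × ℤ => Δ.2 = e)
            ((↑((c.filter (fun Γ => Γ.1 ≠ Γ.2)).map (fun Γ => (Γ.1, Γ.2 - 1)))) :
              Multiset (ℤ × ℤ))) = 0 := by
          rw [Multiset.filter_eq_nil]
          intro a ha
          rw [Multiset.mem_coe, List.mem_map] at ha
          obtain ⟨Γ, hΓ, rfl⟩ := ha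
          rw [List.mem_filter] at hΓ
          have := h2 Γ (Multiset.mem_of_le hc.2.1 (Multiset.mem_coe.mpr hΓ.1))
          simp only
          omega
        rw [hz, Multiset.filter_sub, Multiset.card_sub (Multiset.filter_le_filter _ hc.2.1)]
        have hone : Multiset.card ((↑c : Multiset (ℤ × ℤ)).filter (fun Δ => Δ.2 = e)) = 1 := by
          obtain ⟨hd, tl, rfl⟩ := List.exists_cons_of_ne_nil hc.1
          have hhd : hd.2 = e := hhead
          have htl0 : ((↑tl : Multiset (ℤ × ℤ)).filter (fun Δ => Δ.2 = e)) = 0 := by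
            rw [Multiset.filter_eq_nil]
            intro a ha
            rw [Multiset.mem_coe] at ha
            obtain ⟨⟨j, hj⟩, rfl⟩ := List.mem_iff_get.mp ha
            have hgt : ((hd :: tl).get ⟨j + 1, by simpa using Nat.succ_lt_succ hj⟩).2
                = (((hd :: tl)).headD (0, 0)).2 - ((j + 1 : ℕ) : ℤ) :=
              MW.chain_get_end hc (j + 1) _
            have hget : ((hd :: tl).get ⟨j + 1, by simpa using Nat.succ_lt_succ hj⟩)
                = tl.get ⟨j, hj⟩ := rfl
            rw [hget] at hgt
            simp only [List.headD_cons] at hgt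
            push_cast at hgt
            omega
          rw [← Multiset.cons_coe,
            Multiset.filter_cons_of_pos (p := fun Δ : ℤ × ℤ => Δ.2 = e) _ hhd, htl0]
          simp
        rw [hone, h3]
        simp only [Multiset.card_zero]
        omega
  have hheadend : ∀ i, i < t → ∀ c : List (ℤ × ℤ), MS.IsMWChain (B i) c →
      (c.headD (0, 0)).2 = e := by
    intro i hi c hc
    obtain ⟨-, h2, h3⟩ := hinv i hi.le
    have hhd_mem : c.headD (0, 0) ∈ B i := by
      rw [MW.headD_eq_get hc.1]
      exact Multiset.mem_of_le hc.2.1 (Multiset.mem_coe.mpr (c.get_mem _))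
    have hpos : 0 < Multiset.card ((B i).filter (fun Δ => Δ.2 = e)) := by omega
    obtain ⟨Δe, hΔe⟩ := Multiset.card_pos_iff_exists_mem.mp hpos
    rw [Multiset.mem_filter] at hΔe
    have ha := hc.2.2.1 Δe hΔe.1
    have hb := h2 _ hhd_mem
    have hcc := hΔe.2
    omega
  constructor
  · intro i hi
    obtain ⟨c, hc, hM, hB⟩ := hstep i hi
    rw [hM]
    exact hheadend i hi c hc
  · have hcons : ∀ i, i + 1 < t → (M i).1 ≤ (M (i + 1)).1 := by
      intro i hi1
      obtain ⟨c, hc, hM, hB⟩ := hstep i (by omega)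
      obtain ⟨c', hc', hM', hB'⟩ := hstep (i + 1) hi1
      have hee : (c'.headD (0, 0)).2 = (c.headD (0, 0)).2 := by
        rw [hheadend (i + 1) hi1 c' hc', hheadend i (by omega) c hc]
      have h := MW.key_m hc hc' hB hee
      rw [hM, hM']
      exact h
    have mono : ∀ j, j < t → ∀ i, i ≤ j → (M i).1 ≤ (M j).1 := by
      intro j
      induction j with
      | zero =>
        intro _ i hi
        have : i = 0 := by omega
        subst this
        exact le_refl _
      | succ j ih =>
        intro hjt i hij
        rcases Nat.lt_or_ge i (j + 1) with h | h
        · exact le_trans (ih (by omega) i (by omega)) (hcons j hjt)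
        · have : i = j + 1 := by omega
          subst this
          exact le_refl _
    intro i j hij hjt
    exact mono j hjt i hij
end

section
/- With the setup of the iterated MW algorithm (β^0 = β, β^{i+1} = β^i \ M(β^i)), let K^i ⊆ J be the index set of segments of β^i that are shortened at step i, with indices tracked through the identifications J ⊇ J^1 ⊇ J^2 ⊇ .... Let t be the number of segments of β whose end value equals the maximal end value e. Then the index sets K^0, K^1, ..., K^{t−1} are mutually disjoint; equivalently, no segment of β is shortened twice during the first t iterations of the MW algorithm. -/
private lemma headD_eq_get' {l : List (ℤ × ℤ)} (h : 0 < l.length) :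
    l.headD (0, 0) = l.get ⟨0, h⟩ := by
  cases l with
  | nil => simp at h
  | cons a t => rfl

private lemma mw_chain_get_snd {γ : Multiset (ℤ × ℤ)} {cl : List (ℤ × ℤ)}
    (hch : cl.Chain' (fun Δ Δ' => Δ'.2 = Δ.2 - 1 ∧ Δ'.1 < Δ.1 ∧
      ∀ Γ ∈ γ, Γ.2 = Δ.2 - 1 → Γ.1 < Δ.1 → Γ.1 ≤ Δ'.1)) :
    ∀ p (h : p < cl.length), (cl.get ⟨p, h⟩).2 = (cl.headD (0, 0)).2 - p := by
  intro p
  induction p with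
  | zero =>
    intro h
    rw [headD_eq_get' (by omega)]
    simp
  | succ p ih =>
    intro h
    have hp : p < cl.length := by omega
    have h1 : (cl.get ⟨p + 1, h⟩).2 = (cl.get ⟨p, hp⟩).2 - 1 :=
      ((List.isChain_iff_getElem.mp hch) p (by omega)).1
    have h2 := ih hp
    omega

/-- the segments selected during the first `t` iterations of the MW
algorithm are mutually disjoint unmodified segments of `β`: no segment is shortened
twice, i.e. the multiset sum of the selected chains is a sub-multiset of `β`. -/
theorem mw_chains_disjoint (β : Multiset (ℤ × ℤ)) (hval : ∀ Δ ∈ β, Δ.1 ≤ Δ.2) (hne : β ≠ 0)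
    (e : ℤ) (he : (∃ Δ ∈ β, Δ.2 = e) ∧ ∀ Δ ∈ β, Δ.2 ≤ e)
    (t : ℕ) (ht : t = (β.filter (fun Δ => Δ.2 = e)).card)
    (B : ℕ → Multiset (ℤ × ℤ)) (M : ℕ → ℤ × ℤ) (hB0 : B 0 = β)
    (hstep : ∀ i < t, MS.MWStep (B i) (M i) (B (i + 1)))
    (c : ℕ → List (ℤ × ℤ))
    (hc : ∀ i < t, MS.IsMWChain (B i) (c i) ∧
      (M i) = (((c i).getLastD (0, 0)).2, ((c i).headD (0, 0)).2) ∧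
      B (i + 1) = (B i - ↑(c i)) +
        ↑(((c i).filter (fun Γ => Γ.1 ≠ Γ.2)).map (fun Γ => (Γ.1, Γ.2 - 1)))) :
    (∑ i ∈ Finset.range t, ((c i : Multiset (ℤ × ℤ)))) ≤ β := by
  set S : ℕ → Multiset (ℤ × ℤ) := fun i => ∑ j ∈ Finset.range i, ((c j : Multiset (ℤ × ℤ)))
    with hSdef
  set sh : ℕ → Multiset (ℤ × ℤ) := fun j =>
    ((((c j).filter (fun Γ => Γ.1 ≠ Γ.2)).map (fun Γ => (Γ.1, Γ.2 - 1)) : List (ℤ × ℤ)) :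
      Multiset (ℤ × ℤ)) with hshdef
  set T : ℕ → Multiset (ℤ × ℤ) := fun i => ∑ j ∈ Finset.range i, sh j with hTdef
  have key : ∀ i, i ≤ t →
      (∀ j, j < i → ((c j : Multiset (ℤ × ℤ)) ≤ β - S j) ∧ ((c j).headD (0, 0)).2 = e) ∧
      (∀ j, j ≤ i → B j = (β - S j) + T j ∧ S j ≤ β ∧ (∀ Δ ∈ B j, Δ.2 ≤ e) ∧
        Multiset.card ((β - S j).filter (fun Δ => Δ.2 = e)) = t - j) := by
    intro i
    induction i with
    | zero =>
      intro _
      refine ⟨fun j hj => absurd hj (by omega), fun j hj => ?_⟩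
      have hj0 : j = 0 := by omega
      subst hj0
      have hS0 : S 0 = 0 := by simp [hSdef]
      have hT0 : T 0 = 0 := by simp [hTdef]
      refine ⟨by simp [hS0, hT0, hB0], by simp [hS0], ?_, ?_⟩
      · rw [hB0]; exact he.2
      · simp [hS0, ← ht]
    | succ i ih =>
      intro hi1
      have hi : i < t := by omega
      obtain ⟨ihA, ihB⟩ := ih (by omega)
      obtain ⟨hBi, hSi, hEi, hCi⟩ := ihB i le_rfl
      obtain ⟨hchain, hM, hBsucc⟩ := hc i hi
      obtain ⟨hcne, hcle, hmax2, hmax1, hch, hstop⟩ := hchain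
      have h0len : 0 < (c i).length := List.length_pos_iff.mpr hcne
      -- β - S i is inside B i
      have hsubBi : β - S i ≤ B i := by rw [hBi]; exact Multiset.le_add_right _ _
      -- the head of chain i has end exactly e
      have hhead2 : ((c i).headD (0, 0)).2 = e := by
        have hpos : 0 < Multiset.card ((β - S i).filter (fun Δ => Δ.2 = e)) := by
          rw [hCi]; omega
        obtain ⟨x, hx⟩ := Multiset.card_pos_iff_exists_mem.mp hpos
        obtain ⟨hx1, hx2⟩ := Multiset.mem_filter.mp hx
        have hxe : x.2 ≤ ((c i).headD (0, 0)).2 := hmax2 x (Multiset.mem_of_le hsubBi hx1)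
        have hhdmem : ((c i).headD (0, 0)) ∈ B i := by
          rw [headD_eq_get' h0len]
          exact Multiset.mem_of_le hcle (Multiset.mem_coe.mpr (List.get_mem _ _))
        have := hEi _ hhdmem
        omega
      have hends : ∀ p (h : p < (c i).length), ((c i).get ⟨p, h⟩).2 = e - p := by
        intro p h
        rw [mw_chain_get_snd hch p h, hhead2]
      -- ends of earlier chains
      have hendsj : ∀ j, j < i → ∀ p (h : p < (c j).length), ((c j).get ⟨p, h⟩).2 = e - p := by
        intro j hj p h
        rw [mw_chain_get_snd ((hc j (by omega)).1.2.2.2.2.1) p h, (ihA j hj).2]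
      -- β - S i sits inside every earlier B j
      have hle_Bj : ∀ j, j ≤ i → β - S i ≤ B j := by
        intro j hj
        have h1 : S j ≤ S i := by
          simp only [hSdef]
          exact Finset.sum_le_sum_of_subset (Finset.range_subset_range.mpr hj)
        calc β - S i ≤ β - S j := tsub_le_tsub_left h1 β
          _ ≤ B j := by rw [(ihB j hj).1]; exact Multiset.le_add_right _ _
      -- the main claim, by induction on the position in the chain
      have claim : ∀ k, ∀ hk : k < (c i).length,
          ((c i).get ⟨k, hk⟩) ∈ β - S i ∧
          (∀ j, j < i → ∀ Γ ∈ c j, Γ.2 = ((c i).get ⟨k, hk⟩).2 →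
            ((c i).get ⟨k, hk⟩).1 ≤ Γ.1) := by
        intro k
        induction k with
        | zero =>
          intro hk
          have h20 : ((c i).get ⟨0, hk⟩).2 = e := by have := hends 0 hk; omega
          have hBmem : ((c i).get ⟨0, hk⟩) ∈ B i :=
            Multiset.mem_of_le hcle (Multiset.mem_coe.mpr (List.get_mem _ _))
          have hmem : ((c i).get ⟨0, hk⟩) ∈ β - S i := by
            rcases Multiset.mem_add.mp (by rwa [hBi] at hBmem) with h | h
            · exact h
            · exfalso
              simp only [hTdef] at h
              obtain ⟨j, hj, hmemsh⟩ := Multiset.mem_sum.mp h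
              simp only [hshdef, Multiset.mem_coe, List.mem_map, List.mem_filter] at hmemsh
              obtain ⟨Γ, ⟨hΓmem, -⟩, hΓeq⟩ := hmemsh
              have hj' : j < i := Finset.mem_range.mp hj
              have hΓB : Γ ∈ B j :=
                Multiset.mem_of_le ((hc j (by omega)).1.2.1) (Multiset.mem_coe.mpr hΓmem)
              have hΓe : Γ.2 ≤ e := (ihB j (le_of_lt hj')).2.2.1 Γ hΓB
              have h2 : (Γ.1, Γ.2 - 1).2 = ((c i).get ⟨0, hk⟩).2 := by rw [hΓeq]
              simp only at h2
              omega
          refine ⟨hmem, ?_⟩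
          intro j hj Γ hΓmem hΓ2
          obtain ⟨⟨p, hp⟩, hgp⟩ := List.mem_iff_get.mp hΓmem
          have hΓ2' : Γ.2 = e - (p : ℤ) := by rw [← hgp]; exact hendsj j hj p hp
          have hp0 : p = 0 := by omega
          subst hp0
          have hhdj : ((c j).headD (0, 0)) = Γ := by rw [headD_eq_get' hp, hgp]
          have hmax1j := (hc j (by omega)).1.2.2.2.1
          have hBj : ((c i).get ⟨0, hk⟩) ∈ B j := Multiset.mem_of_le (hle_Bj j (le_of_lt hj)) hmem
          have := hmax1j _ hBj (by rw [hhdj, hΓ2])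
          rwa [hhdj] at this
        | succ k ihk =>
          intro hk
          have hk' : k < (c i).length := by omega
          obtain ⟨ihmem, ihγ⟩ := ihk hk'
          have hrel : ((c i).get ⟨k + 1, hk⟩).2 = ((c i).get ⟨k, hk'⟩).2 - 1 ∧
              ((c i).get ⟨k + 1, hk⟩).1 < ((c i).get ⟨k, hk'⟩).1 ∧
              ∀ Γ ∈ B i, Γ.2 = ((c i).get ⟨k, hk'⟩).2 - 1 →
                Γ.1 < ((c i).get ⟨k, hk'⟩).1 → Γ.1 ≤ ((c i).get ⟨k + 1, hk⟩).1 :=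
            (List.isChain_iff_getElem.mp hch) k (by omega)
          have hBmem : ((c i).get ⟨k + 1, hk⟩) ∈ B i :=
            Multiset.mem_of_le hcle (Multiset.mem_coe.mpr (List.get_mem _ _))
          have hendk : ((c i).get ⟨k, hk'⟩).2 = e - (k : ℤ) := hends k hk'
          have hendk1 : ((c i).get ⟨k + 1, hk⟩).2 = e - ((k : ℤ) + 1) := by
            have := hends (k + 1) hk; omega
          have hmem : ((c i).get ⟨k + 1, hk⟩) ∈ β - S i := by
            rcases Multiset.mem_add.mp (by rwa [hBi] at hBmem) with h | h
            · exact h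
            · exfalso
              simp only [hTdef] at h
              obtain ⟨j, hj, hmemsh⟩ := Multiset.mem_sum.mp h
              simp only [hshdef, Multiset.mem_coe, List.mem_map, List.mem_filter] at hmemsh
              obtain ⟨Γ, ⟨hΓmem, -⟩, hΓeq⟩ := hmemsh
              have hj' : j < i := Finset.mem_range.mp hj
              have h1 : Γ.1 = ((c i).get ⟨k + 1, hk⟩).1 := by rw [← hΓeq]
              have h2 : Γ.2 - 1 = ((c i).get ⟨k + 1, hk⟩).2 := by rw [← hΓeq]
              have hΓ2 : Γ.2 = ((c i).get ⟨k, hk'⟩).2 := by omega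
              have := ihγ j hj' Γ hΓmem hΓ2
              have := hrel.2.1
              omega
          refine ⟨hmem, ?_⟩
          intro j hj Γ hΓmem hΓ2
          obtain ⟨⟨p, hp⟩, hgp⟩ := List.mem_iff_get.mp hΓmem
          have hΓ2' : Γ.2 = e - (p : ℤ) := by rw [← hgp]; exact hendsj j hj p hp
          have hpk : p = k + 1 := by omega
          subst hpk
          have hkj : k < (c j).length := by omega
          have hchj := (hc j (by omega)).1.2.2.2.2.1
          have hrelj : ((c j).get ⟨k + 1, hp⟩).2 = ((c j).get ⟨k, hkj⟩).2 - 1 ∧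
              ((c j).get ⟨k + 1, hp⟩).1 < ((c j).get ⟨k, hkj⟩).1 ∧
              ∀ Θ ∈ B j, Θ.2 = ((c j).get ⟨k, hkj⟩).2 - 1 →
                Θ.1 < ((c j).get ⟨k, hkj⟩).1 → Θ.1 ≤ ((c j).get ⟨k + 1, hp⟩).1 :=
            (List.isChain_iff_getElem.mp hchj) k (by omega)
          have hprevj2 : ((c j).get ⟨k, hkj⟩).2 = e - (k : ℤ) := hendsj j hj k hkj
          have hprevle : ((c i).get ⟨k, hk'⟩).1 ≤ ((c j).get ⟨k, hkj⟩).1 :=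
            ihγ j hj _ (List.get_mem _ _) (by omega)
          have hBj : ((c i).get ⟨k + 1, hk⟩) ∈ B j :=
            Multiset.mem_of_le (hle_Bj j (le_of_lt hj)) hmem
          have hfin := hrelj.2.2 _ hBj (by omega) (by have := hrel.2.1; omega)
          rwa [hgp] at hfin
      -- the chain is a nodup list
      have hnodup : (c i).Nodup := by
        rw [List.nodup_iff_injective_get]
        rintro ⟨p, hp⟩ ⟨q, hq⟩ hpq
        have h1 := hends p hp
        have h2 := hends q hq
        rw [hpq] at h1
        have : p = q := by omega
        exact Fin.ext this
      -- chain i is inside β - S i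
      have hcleS : ((c i : Multiset (ℤ × ℤ))) ≤ β - S i := by
        rw [Multiset.le_iff_count]
        intro x
        by_cases hx : x ∈ c i
        · have h1 : Multiset.count x ((c i : Multiset (ℤ × ℤ))) ≤ 1 :=
            Multiset.nodup_iff_count_le_one.mp (Multiset.coe_nodup.mpr hnodup) x
          obtain ⟨⟨p, hp⟩, hgp⟩ := List.mem_iff_get.mp hx
          have hmem : x ∈ β - S i := by rw [← hgp]; exact (claim p hp).1
          have h2 : 1 ≤ Multiset.count x (β - S i) := Multiset.one_le_count_iff_mem.mpr hmem
          omega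
        · have : Multiset.count x ((c i : Multiset (ℤ × ℤ))) = 0 :=
            Multiset.count_eq_zero.mpr (by rwa [Multiset.mem_coe])
          omega
      have hS1 : S (i + 1) = S i + ((c i : Multiset (ℤ × ℤ))) := by
        simp only [hSdef]; exact Finset.sum_range_succ _ _
      have hT1 : T (i + 1) = T i + sh i := by
        simp only [hTdef]; exact Finset.sum_range_succ _ _
      have hSle : S (i + 1) ≤ β := by
        rw [hS1]; exact (le_tsub_iff_left hSi).mp hcleS
      have hB1 : B (i + 1) = (β - S (i + 1)) + T (i + 1) := by
        have hsh' : B (i + 1) = (B i - ((c i : Multiset (ℤ × ℤ)))) + sh i := hBsucc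
        refine Multiset.ext.mpr fun x => ?_
        rw [hsh', hBi, hS1, hT1]
        have h1 := Multiset.le_iff_count.mp hcleS x
        have h2 := Multiset.le_iff_count.mp hSi x
        simp only [Multiset.count_add, Multiset.count_sub] at *
        omega
      have hE1 : ∀ Δ ∈ B (i + 1), Δ.2 ≤ e := by
        rw [hBsucc]
        intro Δ hΔ
        rcases Multiset.mem_add.mp hΔ with h | h
        · exact hEi Δ (Multiset.mem_of_le (tsub_le_self) h)
        · simp only [Multiset.mem_coe, List.mem_map, List.mem_filter] at h
          obtain ⟨Γ, ⟨hΓmem, -⟩, hΓeq⟩ := h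
          have hΓB : Γ ∈ B i := Multiset.mem_of_le hcle (Multiset.mem_coe.mpr hΓmem)
          have := hEi Γ hΓB
          have h2 : Δ.2 = Γ.2 - 1 := by rw [← hΓeq]
          omega
      -- the filtered card of chain i is 1
      have hfil : Multiset.card (Multiset.filter (fun Δ => Δ.2 = e)
          ((c i : Multiset (ℤ × ℤ)))) = 1 := by
        set g0 := (c i).get ⟨0, h0len⟩ with hg0
        have huniq : ∀ x ∈ Multiset.filter (fun Δ => Δ.2 = e) ((c i : Multiset (ℤ × ℤ))),
            x = g0 := by
          intro x hx
          obtain ⟨hx1, hx2⟩ := Multiset.mem_filter.mp hx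
          obtain ⟨⟨p, hp⟩, hgp⟩ := List.mem_iff_get.mp (Multiset.mem_coe.mp hx1)
          have := hends p hp
          rw [hgp] at this
          have hp0 : p = 0 := by omega
          subst hp0
          rw [← hgp]
        have hmemg0 : g0 ∈ Multiset.filter (fun Δ => Δ.2 = e) ((c i : Multiset (ℤ × ℤ))) := by
          refine Multiset.mem_filter.mpr ⟨Multiset.mem_coe.mpr (List.get_mem _ _), ?_⟩
          have := hends 0 h0len; simpa [hg0] using this
        have hle1 : Multiset.filter (fun Δ => Δ.2 = e) ((c i : Multiset (ℤ × ℤ))) ≤ {g0} := by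
          rw [Multiset.le_iff_count]
          intro x
          by_cases hx : x ∈ Multiset.filter (fun Δ => Δ.2 = e) ((c i : Multiset (ℤ × ℤ)))
          · have hx0 := huniq x hx
            have hc1 : Multiset.count x (Multiset.filter (fun Δ => Δ.2 = e)
                ((c i : Multiset (ℤ × ℤ)))) ≤ Multiset.count x ((c i : Multiset (ℤ × ℤ))) :=
              Multiset.count_le_of_le x (Multiset.filter_le _ _)
            have hc2 : Multiset.count x ((c i : Multiset (ℤ × ℤ))) ≤ 1 :=
              Multiset.nodup_iff_count_le_one.mp (Multiset.coe_nodup.mpr hnodup) x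
            have hc3 : Multiset.count x ({g0} : Multiset (ℤ × ℤ)) = 1 := by
              rw [hx0]; simp
            omega
          · have : Multiset.count x (Multiset.filter (fun Δ => Δ.2 = e)
                ((c i : Multiset (ℤ × ℤ)))) = 0 := Multiset.count_eq_zero.mpr hx
            omega
        have hcard1 := Multiset.card_le_card hle1
        have hcard2 : 0 < Multiset.card (Multiset.filter (fun Δ => Δ.2 = e)
            ((c i : Multiset (ℤ × ℤ)))) := Multiset.card_pos_iff_exists_mem.mpr ⟨g0, hmemg0⟩
        simp only [Multiset.card_singleton] at hcard1
        omega
      have hfe : Multiset.card ((β - S (i + 1)).filter (fun Δ => Δ.2 = e)) = t - (i + 1) := by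
        have h0 : β - S (i + 1) = (β - S i) - ((c i : Multiset (ℤ × ℤ))) := by
          rw [hS1, tsub_add_eq_tsub_tsub]
        rw [h0, Multiset.filter_sub,
          Multiset.card_sub (Multiset.filter_le_filter _ hcleS), hCi, hfil]
        omega
      refine ⟨?_, ?_⟩
      · intro j hj
        rcases Nat.lt_succ_iff_lt_or_eq.mp hj with h | h
        · exact ihA j h
        · subst h; exact ⟨hcleS, hhead2⟩
      · intro j hj
        by_cases h : j = i + 1
        · subst h; exact ⟨hB1, hSle, hE1, hfe⟩
        · exact ihB j (by omega)
  exact ((key t le_rfl).2 t le_rfl).2.1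
end

section
/- With the iterated MW algorithm notation, for any 0 ≤ i ≤ t−1 and any m^i ≤ l ≤ e, the segments selected at end value l in the successive iterations form an increasing chain: Δ^0_{k^0_l} ⊆ Δ^1_{k^1_l} ⊆ ... ⊆ Δ^i_{k^i_l}, where Δ^r_{k^r_l} is the segment of end value l selected by the MW greedy rule at iteration r (well-defined since m^0 ≤ ... ≤ m^{t−1} ≤ l). -/
namespace MWAux
open MS

/-- The MW chain step relation. -/
abbrev Rel (A : Multiset (ℤ × ℤ)) (Δ Δ' : ℤ × ℤ) : Prop :=
  Δ'.2 = Δ.2 - 1 ∧ Δ'.1 < Δ.1 ∧ ∀ Γ ∈ A, Γ.2 = Δ.2 - 1 → Γ.1 < Δ.1 → Γ.1 ≤ Δ'.1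

lemma pairwise_ends {A : Multiset (ℤ × ℤ)} {l : List (ℤ × ℤ)}
    (h : l.Chain' (Rel A)) : l.Pairwise (fun a b => b.2 < a.2) := by
  haveI : IsTrans (ℤ × ℤ) (fun a b : ℤ × ℤ => b.2 < a.2) :=
    ⟨fun a b c h1 h2 => lt_trans h2 h1⟩
  exact List.isChain_iff_pairwise.mp
    (h.imp (fun {a b} hr => by obtain ⟨h1, -, -⟩ := hr; omega))

lemma ends_inj {l : List (ℤ × ℤ)} (h : l.Pairwise (fun a b => b.2 < a.2))
    {a b : ℤ × ℤ} (ha : a ∈ l) (hb : b ∈ l) (hab : a.2 = b.2) : a = b := by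
  by_contra hne
  have hsym : Symmetric (fun a b : ℤ × ℤ => a.2 ≠ b.2) := fun x y h => h.symm
  haveI : Std.Symm (fun a b : ℤ × ℤ => a.2 ≠ b.2) := ⟨fun a b h => hsym h⟩
  have := (h.imp (fun {x y} hlt => ne_of_gt hlt)).forall ha hb hne
  exact this hab

lemma headD_mem {l : List (ℤ × ℤ)} (h : l ≠ []) : l.headD (0, 0) ∈ l := by
  cases l with
  | nil => simp at h
  | cons a t => exact List.mem_cons_self

lemma get_zero_eq_headD {l : List (ℤ × ℤ)} (h : 0 < l.length) :
    l.get ⟨0, h⟩ = l.headD (0, 0) := by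
  cases l with
  | nil => simp at h
  | cons a t => rfl

lemma getLastD_eq_get {l : List (ℤ × ℤ)} (h : l ≠ []) (hl : l.length - 1 < l.length) :
    l.getLastD (0, 0) = l.get ⟨l.length - 1, hl⟩ := by
  rw [List.getLastD_eq_getLast?, List.getLast?_eq_getLast h, Option.getD_some,
    List.getLast_eq_getElem, List.get_eq_getElem]

/-- If some end value `e` bounding all ends is attained, the head of an MW chain has end `e`. -/
lemma head_end {A : Multiset (ℤ × ℤ)} {l : List (ℤ × ℤ)} {e : ℤ}
    (h : IsMWChain A l) (hex : ∃ Δ ∈ A, Δ.2 = e) (hbd : ∀ Δ ∈ A, Δ.2 ≤ e) :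
    (l.headD (0, 0)).2 = e := by
  obtain ⟨hne, hle, hmax, -, -, -⟩ := h
  obtain ⟨Δ, hΔ, hΔe⟩ := hex
  have h1 : e ≤ (l.headD (0, 0)).2 := hΔe ▸ hmax Δ hΔ
  have h2 : (l.headD (0, 0)).2 ≤ e :=
    hbd _ (Multiset.mem_of_le hle (Multiset.mem_coe.2 (headD_mem hne)))
  omega

/-- One MW step: end bound is preserved and the number of end-`e` segments drops by one. -/
lemma step_count {A B' : Multiset (ℤ × ℤ)} {ca : List (ℤ × ℤ)} {e : ℤ}
    (hca : IsMWChain A ca)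
    (hB' : B' = (A - ↑ca) +
      ↑((ca.filter (fun Γ => Γ.1 ≠ Γ.2)).map (fun Γ => (Γ.1, Γ.2 - 1))))
    (hAe : ∀ Δ ∈ A, Δ.2 ≤ e) (hha : (ca.headD (0, 0)).2 = e) :
    (∀ Δ ∈ B', Δ.2 ≤ e) ∧
      (B'.filter (fun Δ => Δ.2 = e)).card + 1 = (A.filter (fun Δ => Δ.2 = e)).card := by
  obtain ⟨hane, hale, -, -, hachain, -⟩ := hca
  have hcaA : ∀ Γ ∈ ca, Γ ∈ A := fun Γ h => Multiset.mem_of_le hale (Multiset.mem_coe.2 h)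
  have hpa := pairwise_ends hachain
  constructor
  · intro Δ hΔ
    rw [hB', Multiset.mem_add] at hΔ
    rcases hΔ with h | h
    · exact hAe Δ (Multiset.mem_of_le (Multiset.sub_le_self _ _) h)
    · rw [Multiset.mem_coe, List.mem_map] at h
      obtain ⟨Γ, hΓ, hΓΔ⟩ := h
      rw [List.mem_filter] at hΓ
      have := hAe Γ (hcaA Γ hΓ.1)
      have : Δ.2 = Γ.2 - 1 := by rw [← hΓΔ]
      omega
  · -- the new part contributes no end-e segments
    have hsh : Multiset.filter (fun Δ => Δ.2 = e)
        (↑((ca.filter (fun Γ => Γ.1 ≠ Γ.2)).map (fun Γ => (Γ.1, Γ.2 - 1))) : Multiset (ℤ × ℤ)) = 0 := by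
      rw [Multiset.filter_eq_nil]
      intro a ha
      rw [Multiset.mem_coe, List.mem_map] at ha
      obtain ⟨Γ, hΓ, hΓa⟩ := ha
      rw [List.mem_filter] at hΓ
      have := hAe Γ (hcaA Γ hΓ.1)
      have : a.2 = Γ.2 - 1 := by rw [← hΓa]
      omega
    -- the chain contains exactly one end-e segment
    have hone : (Multiset.filter (fun Δ => Δ.2 = e) (↑ca : Multiset (ℤ × ℤ))).card = 1 := by
      obtain ⟨a, tl, rfl⟩ := List.exists_cons_of_ne_nil hane
      have hae : a.2 = e := hha
      have htl : ∀ b ∈ tl, ¬ (b.2 = e) := by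
        intro b hb
        have := (List.pairwise_cons.mp hpa).1 b hb
        omega
      rw [Multiset.filter_coe]
      have h1 : List.filter (fun b => decide (b.2 = e)) tl = [] := by
        rw [List.filter_eq_nil_iff]
        intro b hb
        simpa using htl b hb
      rw [List.filter_cons_of_pos (by simpa using hae), h1]
      rfl
    have hfle : Multiset.filter (fun Δ => Δ.2 = e) (↑ca : Multiset (ℤ × ℤ)) ≤
        Multiset.filter (fun Δ => Δ.2 = e) A := Multiset.filter_le_filter _ hale
    have hcard := Multiset.card_le_card hfle
    rw [hB', Multiset.filter_add, Multiset.card_add, hsh, Multiset.filter_sub,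
      Multiset.card_sub hfle, hone]
    rw [hone] at hcard
    simp
    omega

/-- The key step: each segment of the chain selected from `B'` is contained (same end,
larger base) in a segment of the chain previously selected from `A`. -/
lemma consec {A B' : Multiset (ℤ × ℤ)} {ca cb : List (ℤ × ℤ)} {e : ℤ}
    (hca : IsMWChain A ca) (hcb : IsMWChain B' cb)
    (hB' : B' = (A - ↑ca) +
      ↑((ca.filter (fun Γ => Γ.1 ≠ Γ.2)).map (fun Γ => (Γ.1, Γ.2 - 1))))
    (hAe : ∀ Δ ∈ A, Δ.2 ≤ e)
    (hha : (ca.headD (0, 0)).2 = e) (hhb : (cb.headD (0, 0)).2 = e) :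
    ∀ Δ ∈ cb, ∃ Δ' ∈ ca, Δ'.2 = Δ.2 ∧ Δ.1 ≤ Δ'.1 := by
  obtain ⟨hane, hale, hamax, hamax1, hachain, halast⟩ := hca
  obtain ⟨hbne, hble, hbmax, hbmax1, hbchain, hblast⟩ := hcb
  have hpa := pairwise_ends hachain
  have hcaA : ∀ Γ ∈ ca, Γ ∈ A := fun Γ h => Multiset.mem_of_le hale (Multiset.mem_coe.2 h)
  have hmemB' : ∀ Δ ∈ cb, Δ ∈ A ∨ ∃ Γ ∈ ca, Δ = (Γ.1, Γ.2 - 1) := by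
    intro Δ hΔ
    have hΔB : Δ ∈ B' := Multiset.mem_of_le hble (Multiset.mem_coe.2 hΔ)
    rw [hB', Multiset.mem_add] at hΔB
    rcases hΔB with h | h
    · exact Or.inl (Multiset.mem_of_le (Multiset.sub_le_self _ _) h)
    · right
      rw [Multiset.mem_coe, List.mem_map] at h
      obtain ⟨Γ, hΓ, hΓΔ⟩ := h
      rw [List.mem_filter] at hΓ
      exact ⟨Γ, hΓ.1, hΓΔ.symm⟩
  have key : ∀ j (hj : j < cb.length),
      ∃ Δ' ∈ ca, Δ'.2 = (cb.get ⟨j, hj⟩).2 ∧ (cb.get ⟨j, hj⟩).1 ≤ Δ'.1 := by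
    intro j
    induction j with
    | zero =>
      intro hj
      have hget : cb.get ⟨0, hj⟩ = cb.headD (0, 0) := get_zero_eq_headD hj
      have hΔcb : cb.get ⟨0, hj⟩ ∈ cb := cb.get_mem _
      have hΔe : (cb.get ⟨0, hj⟩).2 = e := by rw [hget, hhb]
      rcases hmemB' _ hΔcb with hA | ⟨Γ, hΓca, hΔΓ⟩
      · refine ⟨ca.headD (0, 0), headD_mem hane, by rw [hha, hΔe], ?_⟩
        exact hamax1 _ hA (by rw [hΔe, hha])
      · exfalso
        have h1 := hAe Γ (hcaA Γ hΓca)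
        have h2 : (cb.get ⟨0, hj⟩).2 = Γ.2 - 1 := by rw [hΔΓ]
        omega
    | succ j ih =>
      intro hj
      have hjlt : j < cb.length := Nat.lt_of_succ_lt hj
      obtain ⟨Δp, hΔpca, hend, hstart⟩ := ih hjlt
      obtain ⟨he1, hlt1, -⟩ := List.isChain_iff_getElem.mp hbchain j (by omega)
      have he1' : (cb.get ⟨j + 1, hj⟩).2 = (cb.get ⟨j, hjlt⟩).2 - 1 := he1
      have hlt1' : (cb.get ⟨j + 1, hj⟩).1 < (cb.get ⟨j, hjlt⟩).1 := hlt1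
      have hΔcb : cb.get ⟨j + 1, hj⟩ ∈ cb := cb.get_mem _
      rcases hmemB' _ hΔcb with hA | ⟨Γ, hΓca, hΔΓ⟩
      · -- the new element comes from A: use the greedy rule of the previous chain
        obtain ⟨⟨k, hk⟩, hkeq⟩ := List.mem_iff_get.mp hΔpca
        by_cases hlast : k + 1 < ca.length
        · obtain ⟨ge1, glt1, gmax⟩ := List.isChain_iff_getElem.mp hachain k (by omega)
          have ge1' : (ca.get ⟨k + 1, hlast⟩).2 = (ca.get ⟨k, hk⟩).2 - 1 := ge1
          refine ⟨ca.get ⟨k + 1, hlast⟩, ca.get_mem _, ?_, ?_⟩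
          · rw [ge1', hkeq, hend, he1']
          · have hkeq' : ca[k] = Δp := hkeq
            refine gmax _ hA ?_ ?_
            · rw [hkeq', hend]; omega
            · rw [hkeq']; omega
        · exfalso
          have hklast : (⟨ca.length - 1, by omega⟩ : Fin ca.length) = ⟨k, hk⟩ :=
            Fin.ext (by simp; omega)
          have hgl : ca.getLastD (0, 0) = Δp := by
            rw [getLastD_eq_get hane (by omega), hklast, hkeq]
          refine halast _ hA ?_ ?_
          · rw [hgl, hend]; omega
          · rw [hgl]; omega
      · -- the new element is a shortened one: contradiction with strict decrease of bases
        exfalso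
        have hΓend : Γ.2 = Δp.2 := by
          have : (cb.get ⟨j + 1, hj⟩).2 = Γ.2 - 1 := by rw [hΔΓ]
          omega
        have hΓΔp : Γ = Δp := ends_inj hpa hΓca hΔpca hΓend
        have hb1 : (cb.get ⟨j + 1, hj⟩).1 = Γ.1 := by rw [hΔΓ]
        have hb2 : Γ.1 = Δp.1 := by rw [hΓΔp]
        omega
  intro Δ hΔ
  obtain ⟨⟨j, hj⟩, hjeq⟩ := List.mem_iff_get.mp hΔ
  obtain ⟨Δ', h1, h2, h3⟩ := key j hj
  exact ⟨Δ', h1, hjeq ▸ h2, hjeq ▸ h3⟩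

end MWAux

/-- the segments selected at a given end value `l` in successive MW
iterations form an increasing chain: for `r ≤ i < t`, the segment of end value `l`
selected at iteration `r` is contained in the one selected at iteration `i`. -/
theorem mw_chains_mono (β : Multiset (ℤ × ℤ)) (hval : ∀ Δ ∈ β, Δ.1 ≤ Δ.2) (hne : β ≠ 0)
    (e : ℤ) (he : (∃ Δ ∈ β, Δ.2 = e) ∧ ∀ Δ ∈ β, Δ.2 ≤ e)
    (t : ℕ) (ht : t = (β.filter (fun Δ => Δ.2 = e)).card)
    (B : ℕ → Multiset (ℤ × ℤ)) (M : ℕ → ℤ × ℤ) (hB0 : B 0 = β)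
    (hstep : ∀ i < t, MS.MWStep (B i) (M i) (B (i + 1)))
    (c : ℕ → List (ℤ × ℤ))
    (hc : ∀ i < t, MS.IsMWChain (B i) (c i) ∧
      (M i) = (((c i).getLastD (0, 0)).2, ((c i).headD (0, 0)).2) ∧
      B (i + 1) = (B i - ↑(c i)) +
        ↑(((c i).filter (fun Γ => Γ.1 ≠ Γ.2)).map (fun Γ => (Γ.1, Γ.2 - 1)))) :
    ∀ i < t, ∀ r ≤ i, ∀ Δ ∈ c i, ∃ Δ' ∈ c r, Δ'.2 = Δ.2 ∧ Δ.1 ≤ Δ'.1 := by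
  classical
  -- counting invariant: at step `i ≤ t` there remain exactly `t - i` end-`e` segments
  have inv : ∀ i, i ≤ t → (∀ Δ ∈ B i, Δ.2 ≤ e) ∧
      ((B i).filter (fun Δ => Δ.2 = e)).card = t - i := by
    intro i
    induction i with
    | zero => intro _; rw [hB0]; exact ⟨he.2, by omega⟩
    | succ i ih =>
      intro hi
      have hit : i < t := by omega
      obtain ⟨hbound, hcard⟩ := ih (le_of_lt hit)
      obtain ⟨hchain, -, hBeq⟩ := hc i hit
      have hex : ∃ Δ ∈ B i, Δ.2 = e := by
        have hpos : 0 < ((B i).filter (fun Δ => Δ.2 = e)).card := by omega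
        obtain ⟨Δ, hΔ⟩ := Multiset.card_pos_iff_exists_mem.mp hpos
        rw [Multiset.mem_filter] at hΔ
        exact ⟨Δ, hΔ.1, hΔ.2⟩
      have hha := MWAux.head_end hchain hex hbound
      obtain ⟨h1, h2⟩ := MWAux.step_count hchain hBeq hbound hha
      exact ⟨h1, by omega⟩
  have hex : ∀ i, i < t → ∃ Δ ∈ B i, Δ.2 = e := by
    intro i hi
    have hpos : 0 < ((B i).filter (fun Δ => Δ.2 = e)).card := by
      have := (inv i (le_of_lt hi)).2; omega
    obtain ⟨Δ, hΔ⟩ := Multiset.card_pos_iff_exists_mem.mp hpos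
    rw [Multiset.mem_filter] at hΔ
    exact ⟨Δ, hΔ.1, hΔ.2⟩
  have hha : ∀ i, i < t → ((c i).headD (0, 0)).2 = e := fun i hi =>
    MWAux.head_end (hc i hi).1 (hex i hi) (inv i (le_of_lt hi)).1
  intro i
  induction i with
  | zero =>
    intro hi r hr Δ hΔ
    interval_cases r
    exact ⟨Δ, hΔ, rfl, le_refl _⟩
  | succ i ih =>
    intro hi r hr Δ hΔ
    rcases Nat.lt_or_ge r (i + 1) with hlt | hge
    · have hit : i < t := by omega
      have hcons := MWAux.consec (hc i hit).1 (hc (i + 1) hi).1 (hc i hit).2.2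
        (inv i (le_of_lt hit)).1 (hha i hit) (hha (i + 1) hi)
      obtain ⟨Δ'', h1, h2, h3⟩ := hcons Δ hΔ
      obtain ⟨Δ', h4, h5, h6⟩ := ih hit r (by omega) Δ'' h1
      exact ⟨Δ', h4, by omega, by omega⟩
    · have : r = i + 1 := by omega
      subst this
      exact ⟨Δ, hΔ, rfl, le_refl _⟩
end

section
/- The Mœglin–Waldspurger involution of the Arthur-type staircase multi-segment δ_{d,a} := {[ (a−d)/2, (a+d)/2 ], [ (a−d)/2 − 1, (a+d)/2 − 1 ], ..., [ (−a−d)/2, (−a+d)/2 ]} (a+1 segments, each of length d+1, with half-integer endpoints when a+d is odd) is δ_{a,d}, i.e. the staircase with roles of a and d swapped: δ~_{d,a} = δ_{a,d}. -/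
open MS

namespace MWStair

/-- The chain selected by the MW greedy algorithm on a staircase: all segments. -/
def chain (x : ℚ) (d a : ℕ) : List (ℚ × ℚ) :=
  (List.range (a+1)).map (fun j : ℕ => (x - (j:ℚ), x + (d:ℚ) - (j:ℚ)))

lemma coe_chain (x : ℚ) (d a : ℕ) : (↑(chain x d a) : Multiset (ℚ × ℚ)) = stair x d a := by
  rw [chain, stair, Multiset.range, Multiset.map_coe]

lemma headD_chain (x : ℚ) (d a : ℕ) : (chain x d a).headD (0,0) = (x, x + (d:ℚ)) := by
  rw [chain, List.range_succ_eq_map]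
  simp

lemma getLastD_chain (x : ℚ) (d a : ℕ) :
    (chain x d a).getLastD (0,0) = (x - (a:ℚ), x + (d:ℚ) - (a:ℚ)) := by
  rw [chain, List.range_succ, List.map_append, List.map_singleton, List.getLastD_concat]

lemma mem_stair {x : ℚ} {d a : ℕ} {Δ : ℚ × ℚ} :
    Δ ∈ stair x d a ↔ ∃ j : ℕ, j ≤ a ∧ Δ = (x - (j:ℚ), x + (d:ℚ) - (j:ℚ)) := by
  rw [stair, Multiset.mem_map]
  simp only [Multiset.mem_range, Nat.lt_succ_iff]
  constructor
  · rintro ⟨j, hj, rfl⟩; exact ⟨j, hj, rfl⟩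
  · rintro ⟨j, hj, rfl⟩; exact ⟨j, hj, rfl⟩

lemma isMWChain (x : ℚ) (d a : ℕ) : IsMWChain (stair x d a) (chain x d a) := by
  refine ⟨by simp [chain], le_of_eq (coe_chain x d a), ?_, ?_, ?_, ?_⟩
  · intro Δ hΔ
    obtain ⟨j, hj, rfl⟩ := mem_stair.1 hΔ
    rw [headD_chain]
    have : (0:ℚ) ≤ (j:ℚ) := Nat.cast_nonneg j
    dsimp
    linarith
  · intro Δ hΔ h
    obtain ⟨j, hj, rfl⟩ := mem_stair.1 hΔ
    rw [headD_chain] at h ⊢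
    dsimp at h ⊢
    have h0 : (0:ℚ) ≤ (j:ℚ) := Nat.cast_nonneg j
    linarith
  · rw [chain]; unfold List.Chain'; rw [List.isChain_map, List.isChain_range_succ]
    intro m hm
    have hcast : ((m+1 : ℕ) : ℚ) = (m:ℚ) + 1 := by push_cast; ring
    dsimp only
    refine ⟨by rw [hcast]; ring, by rw [hcast]; linarith, ?_⟩
    intro Γ hΓ he _
    obtain ⟨j, hj, rfl⟩ := mem_stair.1 hΓ
    dsimp at he ⊢
    rw [hcast]
    linarith
  · rw [getLastD_chain]
    intro Γ hΓ he
    obtain ⟨j, hj, rfl⟩ := mem_stair.1 hΓ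
    dsimp at he ⊢
    have hja : (j:ℚ) ≤ (a:ℚ) := by exact_mod_cast hj
    intro _
    linarith

lemma mwstep_succ (x : ℚ) (d a : ℕ) :
    MWStep (stair x (d+1) a) (x + ((d:ℚ)+1) - (a:ℚ), x + ((d:ℚ)+1)) (stair x d a) := by
  refine ⟨chain x (d+1) a, isMWChain x (d+1) a, ?_, ?_⟩
  · rw [headD_chain, getLastD_chain]
    push_cast
    ring_nf
  · rw [coe_chain, tsub_self, zero_add]
    have hfil : (chain x (d+1) a).filter (fun Γ => Γ.1 ≠ Γ.2) = chain x (d+1) a := by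
      rw [List.filter_eq_self]
      intro Γ hΓ
      obtain ⟨j, hj, rfl⟩ := List.mem_map.1 hΓ
      have hd : (0:ℚ) ≤ (d:ℚ) := Nat.cast_nonneg d
      have hcast : (((d:ℕ)+1 : ℕ) : ℚ) = (d:ℚ) + 1 := by push_cast; ring
      simp only [decide_eq_true_eq, ne_eq, Prod.mk.injEq, hcast]
      intro h
      exfalso
      linarith [h]
    rw [hfil]
    have hmap : (chain x (d+1) a).map (fun Γ => (Γ.1, Γ.2 - 1)) = chain x d a := by
      rw [chain, chain, List.map_map]
      apply List.map_congr_left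
      intro j _
      have hcast : (((d:ℕ)+1 : ℕ) : ℚ) = (d:ℚ) + 1 := by push_cast; ring
      simp only [Function.comp, hcast, Prod.mk.injEq]
      exact ⟨trivial, by ring⟩
    rw [hmap, coe_chain]

lemma mwstep_zero (x : ℚ) (a : ℕ) : MWStep (stair x 0 a) (x - (a:ℚ), x) 0 := by
  refine ⟨chain x 0 a, isMWChain x 0 a, ?_, ?_⟩
  · rw [headD_chain, getLastD_chain]
    norm_num
  · rw [coe_chain, tsub_self, zero_add]
    have hfil : (chain x 0 a).filter (fun Γ => Γ.1 ≠ Γ.2) = [] := by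
      rw [List.filter_eq_nil_iff]
      intro Γ hΓ
      obtain ⟨j, hj, rfl⟩ := List.mem_map.1 hΓ
      simp
    rw [hfil]
    simp

lemma stair_cons (y : ℚ) (ℓ c : ℕ) :
    stair y ℓ (c+1) = (y, y + (ℓ:ℚ)) ::ₘ stair (y-1) ℓ c := by
  rw [stair, stair, Multiset.range, Multiset.range, List.range_succ_eq_map,
    Multiset.map_coe, Multiset.map_coe, List.map_cons, List.map_map]
  rw [show ((y, y + (ℓ:ℚ)) ::ₘ ↑(List.map (fun j : ℕ => (y - 1 - (j:ℚ), y - 1 + (ℓ:ℚ) - (j:ℚ))) (List.range (c+1))) : Multiset (ℚ × ℚ)) = ↑((y, y + (ℓ:ℚ)) :: List.map (fun j : ℕ => (y - 1 - (j:ℚ), y - 1 + (ℓ:ℚ) - (j:ℚ))) (List.range (c+1))) from rfl]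
  congr 1
  simp only [Nat.cast_zero, sub_zero, List.cons.injEq, true_and]
  apply List.map_congr_left
  intro j _
  simp only [Function.comp, Nat.cast_succ, Prod.mk.injEq]
  constructor <;> ring

lemma mwdual_stair (a : ℕ) : ∀ (d : ℕ) (x : ℚ), MWDual (stair x d a) (stair (x + (d:ℚ) - (a:ℚ)) a d) := by
  intro d
  induction d with
  | zero =>
    intro x
    have h : stair (x + ((0:ℕ):ℚ) - (a:ℚ)) a 0 = (x - (a:ℚ), x) ::ₘ (0 : Multiset (ℚ × ℚ)) := by
      rw [stair, Multiset.range_succ, Multiset.range_zero, Multiset.map_cons, Multiset.map_zero]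
      congr 1
      rw [Prod.ext_iff]
      constructor <;> (push_cast; ring)
    rw [h]
    exact MWDual.step (mwstep_zero x a) MWDual.empty
  | succ d ih =>
    intro x
    have h : stair (x + ((d+1:ℕ):ℚ) - (a:ℚ)) a (d+1)
        = (x + ((d:ℚ)+1) - (a:ℚ), x + ((d:ℚ)+1)) ::ₘ stair (x + (d:ℚ) - (a:ℚ)) a d := by
      rw [stair_cons]
      have h1 : x + ((d+1:ℕ):ℚ) - (a:ℚ) = x + ((d:ℚ)+1) - (a:ℚ) := by push_cast; ring
      have h2 : x + ((d+1:ℕ):ℚ) - (a:ℚ) + (a:ℚ) = x + ((d:ℚ)+1) := by push_cast; ring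
      have h3 : x + ((d+1:ℕ):ℚ) - (a:ℚ) - 1 = x + (d:ℚ) - (a:ℚ) := by push_cast; ring
      rw [h3, h2, h1]
    rw [h]
    exact MWDual.step (mwstep_succ x d a) (ih x)

end MWStair

/-- the MW involution of the Arthur staircase `δ_{d,a}` is `δ_{a,d}`. -/
theorem mw_dual_stair (d a : ℕ) :
    MS.MWDual (MS.stair (((a : ℚ) - (d : ℚ)) / 2) d a)
      (MS.stair (((d : ℚ) - (a : ℚ)) / 2) a d) := by
  have h : ((d:ℚ) - (a:ℚ)) / 2 = ((a:ℚ) - (d:ℚ)) / 2 + (d:ℚ) - (a:ℚ) := by ring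
  rw [h]
  exact MWStair.mwdual_stair a d _
end
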